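/- The stationary distribution of a convex combination of irreducible generators is a convex combination of their stationary distributions: if Q¹,…,Qⁿ are irreducible conservative generators on {1,…,S} such that every convex combination is also irreducible, and Q = ∑_k λ_k Q^k with λ_k ≥ 0, ∑ λ_k = 1, then the unique stationary distribution x of Q lies in the convex hull of the stationary distributions x¹,…,xⁿ of Q¹,…,Qⁿ — provided the Q^k all arise as Q^{d} for deterministic strategies d from a common family Q_{ija} and Q = Q^π for a stationary strategy π. Explicitly, x = ∑_{(a_1,…,a_S)} μ_{(a_1,…,a_S)} x^{d^{(a_1,…,a_S)}} with μ_{(a_1,…,a_S)} = π_{1a_1}⋯π_{Sa_S} det(Q̃^{d^{(a_1,…,a_S)}})/det(Q̃^π) ≥ 0 summing to 1. -/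
import Mathlib


/-- The strategy-averaged generator `Q^π`. -/
def aggGen {n : ℕ} {𝒜 : Type*} [Fintype 𝒜]
    (Q : 𝒜 → Matrix (Fin (n + 1)) (Fin (n + 1)) ℝ)
    (π : Fin (n + 1) → 𝒜 → ℝ) : Matrix (Fin (n + 1)) (Fin (n + 1)) ℝ :=
  Matrix.of fun i j => ∑ a, Q a i j * π i a

/-- The deterministic generator `Q^d`. -/
def detGen {n : ℕ} {𝒜 : Type*}
    (Q : 𝒜 → Matrix (Fin (n + 1)) (Fin (n + 1)) ℝ)
    (d : Fin (n + 1) → 𝒜) : Matrix (Fin (n + 1)) (Fin (n + 1)) ℝ :=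
  Matrix.of fun i j => Q (d i) i j

/-- `M̃`: the transpose of `M` with the last row replaced by ones. -/
def tildeMat {n : ℕ} (M : Matrix (Fin (n + 1)) (Fin (n + 1)) ℝ) :
    Matrix (Fin (n + 1)) (Fin (n + 1)) ℝ :=
  Matrix.of fun i j => if i = Fin.last n then 1 else M j i

section Aux

open Matrix Finset

/-- Multilinearity of the determinant, expanded over a per-row decomposition. -/
lemma det_decomp {n : ℕ} {𝒜 : Type*} [Fintype 𝒜] [DecidableEq 𝒜]
    (π : Fin (n + 1) → 𝒜 → ℝ) (w : Fin (n + 1) → 𝒜 → (Fin (n + 1) → ℝ)) :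
    (Matrix.of fun j => ∑ a, π j a • w j a).det
      = ∑ d : Fin (n + 1) → 𝒜, (∏ j, π j (d j)) * (Matrix.of fun j => w j (d j)).det := by
  classical
  have h := (Matrix.detRowAlternating (n := Fin (n+1)) (R := ℝ)).toMultilinearMap.map_sum
      (g := fun j (a : 𝒜) => π j a • w j a)
  simp only [AlternatingMap.coe_multilinearMap] at h
  have h1 : (Matrix.of fun j => ∑ a, π j a • w j a).det
      = Matrix.detRowAlternating (fun j => ∑ a, π j a • w j a) := rfl
  rw [h1, h]
  refine Finset.sum_congr rfl fun d _ => ?_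
  have h2 := (Matrix.detRowAlternating (n := Fin (n+1)) (R := ℝ)).toMultilinearMap.map_smul_univ
      (fun j => π j (d j)) (fun j => w j (d j))
  simp only [AlternatingMap.coe_multilinearMap] at h2
  rw [h2, smul_eq_mul]
  rfl

/-- An irreducible conservative generator has, among left-kernel vectors,
only vectors of constant strict sign once one entry is positive. -/
lemma pos_of_kernel {n : ℕ} (M : Matrix (Fin (n + 1)) (Fin (n + 1)) ℝ)
    (hoff : ∀ i j, i ≠ j → 0 ≤ M i j) (hrow : ∀ i, ∑ j, M i j = 0)
    (hirr : ∀ i j, Relation.ReflTransGen (fun p q => p ≠ q ∧ 0 < M p q) i j)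
    (v : Fin (n + 1) → ℝ) (hv : Matrix.vecMul v M = 0)
    (i0 : Fin (n + 1)) (hi0 : 0 < v i0) : ∀ j, 0 < v j := by
  classical
  set T : Finset (Fin (n + 1)) := Finset.univ.filter (fun i => 0 < v i) with hT
  have key : ∀ p ∈ T, ∀ q, q ∉ T → M p q = 0 := by
    have hle : ∀ i, v i * ∑ j ∈ T, M i j ≤ 0 := by
      intro i
      by_cases hi : i ∈ T
      · have hvi : 0 < v i := (Finset.mem_filter.mp hi).2
        have hsplit : ∑ j ∈ T, M i j + ∑ j ∈ Tᶜ, M i j = 0 := by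
          rw [Finset.sum_add_sum_compl]; exact hrow i
        have hcn : 0 ≤ ∑ j ∈ Tᶜ, M i j := by
          apply Finset.sum_nonneg
          intro j hj
          have hij : i ≠ j := by
            rintro rfl; exact (Finset.mem_compl.mp hj) hi
          exact hoff i j hij
        nlinarith
      · have hvi : v i ≤ 0 := by
          by_contra h
          exact hi (Finset.mem_filter.mpr ⟨Finset.mem_univ _, lt_of_not_ge h⟩)
        have hcn : 0 ≤ ∑ j ∈ T, M i j := by
          apply Finset.sum_nonneg
          intro j hj
          have hij : i ≠ j := by
            rintro rfl; exact hi hj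
          exact hoff i j hij
        nlinarith
    have hsum0 : ∑ i, v i * ∑ j ∈ T, M i j = 0 := by
      have : ∀ j ∈ T, ∑ i, v i * M i j = 0 := by
        intro j _
        have := congrFun hv j
        simpa [Matrix.vecMul, dotProduct] using this
      calc ∑ i, v i * ∑ j ∈ T, M i j = ∑ i, ∑ j ∈ T, v i * M i j := by
            simp [Finset.mul_sum]
        _ = ∑ j ∈ T, ∑ i, v i * M i j := Finset.sum_comm
        _ = 0 := Finset.sum_eq_zero this
    have hall : ∀ i ∈ Finset.univ, v i * ∑ j ∈ T, M i j = 0 :=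
      (Finset.sum_eq_zero_iff_of_nonpos (fun i _ => hle i)).mp hsum0
    intro p hp q hq
    have hvp : 0 < v p := (Finset.mem_filter.mp hp).2
    have h0 : ∑ j ∈ T, M p j = 0 := by
      have := hall p (Finset.mem_univ p)
      rcases mul_eq_zero.mp this with h | h
      · linarith
      · exact h
    have hcomp : ∑ j ∈ Tᶜ, M p j = 0 := by
      have := hrow p
      rw [← Finset.sum_add_sum_compl T (fun j => M p j), h0, zero_add] at this
      exact this
    have hnn : ∀ j ∈ Tᶜ, 0 ≤ M p j := by
      intro j hj
      have hpj : p ≠ j := by rintro rfl; exact (Finset.mem_compl.mp hj) hp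
      exact hoff p j hpj
    have := (Finset.sum_eq_zero_iff_of_nonneg hnn).mp hcomp
    exact this q (Finset.mem_compl.mpr hq)
  intro j
  have hreach := hirr i0 j
  have hi0T : i0 ∈ T := Finset.mem_filter.mpr ⟨Finset.mem_univ _, hi0⟩
  have : j ∈ T := by
    induction hreach with
    | refl => exact hi0T
    | tail _ hbc ih =>
      by_contra hc
      have := key _ ih _ hc
      exact absurd this (ne_of_gt hbc.2)
  exact (Finset.mem_filter.mp this).2

/-- `tildeMat` of an irreducible conservative generator is nonsingular. -/
lemma tilde_det_ne_zero {n : ℕ} (M : Matrix (Fin (n + 1)) (Fin (n + 1)) ℝ)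
    (hoff : ∀ i j, i ≠ j → 0 ≤ M i j) (hrow : ∀ i, ∑ j, M i j = 0)
    (hirr : ∀ i j, Relation.ReflTransGen (fun p q => p ≠ q ∧ 0 < M p q) i j) :
    (tildeMat M).det ≠ 0 := by
  classical
  intro hdet
  obtain ⟨v, hv0, hv⟩ := (Matrix.exists_mulVec_eq_zero_iff.mpr hdet)
  have hmv : ∀ i, (tildeMat M *ᵥ v) i
      = if i = Fin.last n then ∑ j, v j else Matrix.vecMul v M i := by
    intro i
    simp only [Matrix.mulVec, dotProduct, tildeMat, Matrix.of_apply, Matrix.vecMul]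
    by_cases h : i = Fin.last n <;> simp [h, dotProduct, mul_comm]
  have hsumv : ∑ j, v j = 0 := by
    have := congrFun hv (Fin.last n)
    rw [hmv] at this; simpa using this
  have hker : ∀ i, Matrix.vecMul v M i = 0 := by
    intro i
    by_cases h : i = Fin.last n
    · have htot : ∑ i, Matrix.vecMul v M i = 0 := by
        have : ∑ i, Matrix.vecMul v M i = ∑ j, v j * ∑ i, M j i := by
          simp only [Matrix.vecMul, dotProduct, Finset.mul_sum]
          exact Finset.sum_comm
        simp [this, hrow]
      have hrest : ∀ i ∈ Finset.univ \ {Fin.last n}, Matrix.vecMul v M i = 0 := by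
        intro i hi
        have hne : i ≠ Fin.last n := by simpa using (Finset.mem_sdiff.mp hi).2
        have := congrFun hv i
        rw [hmv] at this; simpa [hne] using this
      have : Matrix.vecMul v M (Fin.last n) = 0 := by
        have hsplit := Finset.sum_eq_sum_sdiff_singleton_add (Finset.mem_univ (Fin.last n))
            (fun i => Matrix.vecMul v M i)
        rw [htot] at hsplit
        rw [Finset.sum_eq_zero hrest] at hsplit
        linarith [hsplit]
      rwa [h]
    · have := congrFun hv i
      rw [hmv] at this; simpa [h] using this
  have hkerf : Matrix.vecMul v M = 0 := funext hker
  apply hv0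
  funext i
  by_cases hp : ∃ i0, 0 < v i0
  · obtain ⟨i0, hi0⟩ := hp
    have := pos_of_kernel M hoff hrow hirr v hkerf i0 hi0
    have : (0:ℝ) < ∑ j, v j := Finset.sum_pos (fun j _ => this j) ⟨i, Finset.mem_univ i⟩
    linarith [hsumv]
  · push_neg at hp
    by_cases hn : ∃ i0, v i0 < 0
    · obtain ⟨i0, hi0⟩ := hn
      have hker' : Matrix.vecMul (-v) M = 0 := by
        rw [Matrix.neg_vecMul, hkerf, neg_zero]
      have hall := pos_of_kernel M hoff hrow hirr (-v) hker' i0 (by simpa using hi0)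
      have : (0:ℝ) < ∑ j, (-v) j := Finset.sum_pos (fun j _ => hall j) ⟨i, Finset.mem_univ i⟩
      simp only [Pi.neg_apply, Finset.sum_neg_distrib] at this
      linarith [hsumv]
    · push_neg at hn
      simp only [Pi.zero_apply]
      exact le_antisymm (hp i) (hn i)

variable {n : ℕ} {𝒜 : Type*} [Fintype 𝒜]
variable (Q : 𝒜 → Matrix (Fin (n + 1)) (Fin (n + 1)) ℝ)

lemma agg_off (hoff : ∀ a i j, i ≠ j → 0 ≤ Q a i j) (π : Fin (n + 1) → 𝒜 → ℝ)
    (hpos : ∀ i a, 0 ≤ π i a) : ∀ i j, i ≠ j → 0 ≤ aggGen Q π i j := by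
  intro i j hij
  exact Finset.sum_nonneg fun a _ => mul_nonneg (hoff a i j hij) (hpos i a)

lemma agg_row (hrow : ∀ a i, ∑ j, Q a i j = 0) (π : Fin (n + 1) → 𝒜 → ℝ) :
    ∀ i, ∑ j, aggGen Q π i j = 0 := by
  intro i
  simp only [aggGen, Matrix.of_apply]
  rw [Finset.sum_comm]
  simp [← Finset.sum_mul, hrow]

lemma agg_det_ne_zero (hoff : ∀ a i j, i ≠ j → 0 ≤ Q a i j)
    (hrow : ∀ a i, ∑ j, Q a i j = 0)
    (hirr : ∀ π : Fin (n + 1) → 𝒜 → ℝ,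
      (∀ i a, 0 ≤ π i a) → (∀ i, ∑ a, π i a = 1) →
      ∀ i j : Fin (n + 1),
        Relation.ReflTransGen (fun p q => p ≠ q ∧ 0 < aggGen Q π p q) i j)
    (π : Fin (n + 1) → 𝒜 → ℝ)
    (hpos : ∀ i a, 0 ≤ π i a) (hsum : ∀ i, ∑ a, π i a = 1) :
    (tildeMat (aggGen Q π)).det ≠ 0 :=
  tilde_det_ne_zero _ (agg_off Q hoff π hpos) (agg_row Q hrow π) (hirr π hpos hsum)

/-- The determinants of `tildeMat (aggGen Q π)` have uniform sign over strategies. -/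
lemma det_same_sign (hoff : ∀ a i j, i ≠ j → 0 ≤ Q a i j)
    (hrow : ∀ a i, ∑ j, Q a i j = 0)
    (hirr : ∀ π : Fin (n + 1) → 𝒜 → ℝ,
      (∀ i a, 0 ≤ π i a) → (∀ i, ∑ a, π i a = 1) →
      ∀ i j : Fin (n + 1),
        Relation.ReflTransGen (fun p q => p ≠ q ∧ 0 < aggGen Q π p q) i j)
    (π₁ π₂ : Fin (n + 1) → 𝒜 → ℝ)
    (h1p : ∀ i a, 0 ≤ π₁ i a) (h1s : ∀ i, ∑ a, π₁ i a = 1)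
    (h2p : ∀ i a, 0 ≤ π₂ i a) (h2s : ∀ i, ∑ a, π₂ i a = 1) :
    0 < (tildeMat (aggGen Q π₁)).det * (tildeMat (aggGen Q π₂)).det := by
  classical
  set g : ℝ → ℝ := fun t =>
    (tildeMat (aggGen Q (fun i a => (1 - t) * π₁ i a + t * π₂ i a))).det with hg
  have hcont : Continuous g := by
    apply Continuous.matrix_det
    apply continuous_matrix
    intro i j
    simp only [tildeMat, aggGen, Matrix.of_apply]
    by_cases h : i = Fin.last n
    · simpa [h] using continuous_const
    · simp only [h, if_false]
      exact continuous_finset_sum _ fun a _ => by continuity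
  have hvalid : ∀ t ∈ Set.Icc (0:ℝ) 1, g t ≠ 0 := by
    intro t ht
    apply agg_det_ne_zero Q hoff hrow hirr
    · intro i a
      have h1 : (0:ℝ) ≤ 1 - t := by linarith [ht.2]
      exact add_nonneg (mul_nonneg h1 (h1p i a)) (mul_nonneg ht.1 (h2p i a))
    · intro i
      simp only [Finset.sum_add_distrib, ← Finset.mul_sum, h1s i, h2s i]
      ring
  have hg0 : g 0 = (tildeMat (aggGen Q π₁)).det := by simp [hg]
  have hg1 : g 1 = (tildeMat (aggGen Q π₂)).det := by simp [hg]
  by_contra hc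
  push_neg at hc
  have hne0 : g 0 ≠ 0 := hvalid 0 (by norm_num)
  have hne1 : g 1 ≠ 0 := hvalid 1 (by norm_num)
  have hlt : g 0 * g 1 < 0 := by
    rw [hg0, hg1]
    rcases lt_or_eq_of_le hc with h | h
    · exact h
    · exact absurd h (mul_ne_zero (hg0 ▸ hne0) (hg1 ▸ hne1))
  have hmem : (0:ℝ) ∈ Set.uIcc (g 0) (g 1) := by
    rcases mul_neg_iff.mp hlt with ⟨ha, hb⟩ | ⟨ha, hb⟩
    · exact Set.mem_uIcc.mpr (Or.inr ⟨le_of_lt hb, le_of_lt ha⟩)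
    · exact Set.mem_uIcc.mpr (Or.inl ⟨le_of_lt ha, le_of_lt hb⟩)
  obtain ⟨t, ht, hgt⟩ :=
    intermediate_value_uIcc (a := (0:ℝ)) (b := 1) (f := g) hcont.continuousOn hmem
  rw [Set.uIcc_of_le (by norm_num : (0:ℝ) ≤ 1)] at ht
  exact hvalid t ht hgt

/-- Cramer's rule for a solved linear system. -/
lemma cramer_sol {n : ℕ} (M : Matrix (Fin (n + 1)) (Fin (n + 1)) ℝ)
    (y b : Fin (n + 1) → ℝ) (h : M *ᵥ y = b) (i : Fin (n + 1)) :
    (M.updateCol i b).det = M.det * y i := by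
  have hc : Matrix.cramer M b = M.det • y := by
    rw [← h, Matrix.cramer_eq_adjugate_mulVec, Matrix.mulVec_mulVec, Matrix.adjugate_mul,
      Matrix.smul_mulVec, Matrix.one_mulVec]
  have := congrFun hc i
  rw [Matrix.cramer_apply] at this
  simpa using this

/-- A stationary distribution solves the `tildeMat` linear system. -/
lemma tilde_mulVec {n : ℕ} (M : Matrix (Fin (n + 1)) (Fin (n + 1)) ℝ)
    (y : Fin (n + 1) → ℝ) (hy : Matrix.vecMul y M = 0) (hs : ∑ i, y i = 1) :
    tildeMat M *ᵥ y = Pi.single (Fin.last n) 1 := by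
  funext i
  simp only [Matrix.mulVec, dotProduct, tildeMat, Matrix.of_apply]
  by_cases h : i = Fin.last n
  · subst h
    simp [hs, Pi.single_eq_same]
  · have h0 := congrFun hy i
    simp only [Matrix.vecMul, dotProduct, Pi.zero_apply] at h0
    rw [Pi.single_eq_of_ne h]
    simp only [h, if_false]
    rw [← h0]
    exact Finset.sum_congr rfl fun j _ => mul_comm _ _

lemma stationary_aux {n : ℕ} {𝒜 : Type*}
    [Fintype 𝒜] [DecidableEq 𝒜] [Nonempty 𝒜]
    (Q : 𝒜 → Matrix (Fin (n + 1)) (Fin (n + 1)) ℝ)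
    (hoff : ∀ a i j, i ≠ j → 0 ≤ Q a i j)
    (hrow : ∀ a i, ∑ j, Q a i j = 0)
    (hirr : ∀ π : Fin (n + 1) → 𝒜 → ℝ,
      (∀ i a, 0 ≤ π i a) → (∀ i, ∑ a, π i a = 1) →
      ∀ i j : Fin (n + 1),
        Relation.ReflTransGen (fun p q => p ≠ q ∧ 0 < aggGen Q π p q) i j)
    (π : Fin (n + 1) → 𝒜 → ℝ)
    (hpos : ∀ i a, 0 ≤ π i a) (hsum : ∀ i, ∑ a, π i a = 1)
    (x : Fin (n + 1) → ℝ)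
    (hx0 : ∀ i, 0 ≤ x i) (hx1 : ∑ i, x i = 1)
    (hx : Matrix.vecMul x (aggGen Q π) = 0)
    (xd : (Fin (n + 1) → 𝒜) → Fin (n + 1) → ℝ)
    (hxd : ∀ d : Fin (n + 1) → 𝒜, (∀ i, 0 ≤ xd d i) ∧ (∑ i, xd d i = 1) ∧
      Matrix.vecMul (xd d) (detGen Q d) = 0) :
    (∀ d : Fin (n + 1) → 𝒜,
      0 ≤ (∏ k, π k (d k)) * (tildeMat (detGen Q d)).det /
        (tildeMat (aggGen Q π)).det) ∧
    (∑ d : Fin (n + 1) → 𝒜,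
      (∏ k, π k (d k)) * (tildeMat (detGen Q d)).det /
        (tildeMat (aggGen Q π)).det) = 1 ∧
    ∀ i, x i = ∑ d : Fin (n + 1) → 𝒜,
      ((∏ k, π k (d k)) * (tildeMat (detGen Q d)).det /
        (tildeMat (aggGen Q π)).det) * xd d i := by
  classical
  set e : Fin (n + 1) → ℝ := Pi.single (Fin.last n) 1 with he
  set D : ℝ := (tildeMat (aggGen Q π)).det with hD
  set Dd : (Fin (n + 1) → 𝒜) → ℝ := fun d => (tildeMat (detGen Q d)).det with hDd
  set c : (Fin (n + 1) → 𝒜) → ℝ := fun d => ∏ k, π k (d k) with hc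
  -- deterministic strategies
  set δ : (Fin (n + 1) → 𝒜) → Fin (n + 1) → 𝒜 → ℝ :=
    fun d i a => if a = d i then 1 else 0 with hδ
  have hδpos : ∀ d i a, 0 ≤ δ d i a := by
    intro d i a; by_cases h : a = d i <;> simp [hδ, h]
  have hδsum : ∀ d i, ∑ a, δ d i a = 1 := by
    intro d i; simp [hδ]
  have hδagg : ∀ d, aggGen Q (δ d) = detGen Q d := by
    intro d
    ext i j
    simp [aggGen, detGen, hδ, mul_ite]
  -- nonsingularity and sign
  have hDne : D ≠ 0 := agg_det_ne_zero Q hoff hrow hirr π hpos hsum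
  have hsign : ∀ d, 0 < Dd d * D := by
    intro d
    have := det_same_sign Q hoff hrow hirr (δ d) π (hδpos d) (hδsum d) hpos hsum
    rwa [hδagg d] at this
  -- transposed view: tildeMat M = Nᵀ
  have htilde : ∀ M : Matrix (Fin (n + 1)) (Fin (n + 1)) ℝ,
      tildeMat M = (Matrix.of fun j i => if i = Fin.last n then (1:ℝ) else M j i)ᵀ := by
    intro M; ext i j; simp [tildeMat, Matrix.transpose_apply]
  -- the per-state column vectors
  set v : Fin (n + 1) → 𝒜 → (Fin (n + 1) → ℝ) :=
    fun j a i => if i = Fin.last n then 1 else Q a j i with hv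
  have hrowagg : (Matrix.of fun j i => if i = Fin.last n then (1:ℝ) else aggGen Q π j i)
      = Matrix.of fun j => ∑ a, π j a • v j a := by
    ext j i
    simp only [Matrix.of_apply, hv, Finset.sum_apply, Pi.smul_apply, smul_eq_mul, mul_ite]
    by_cases h : i = Fin.last n
    · simp [h, hsum j]
    · simp only [h, if_false, aggGen, Matrix.of_apply]
      exact Finset.sum_congr rfl fun a _ => mul_comm _ _
  have hrowdet : ∀ d, (Matrix.of fun j i => if i = Fin.last n then (1:ℝ) else detGen Q d j i)
      = Matrix.of fun j => v j (d j) := by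
    intro d; ext j i
    simp only [Matrix.of_apply, hv, detGen]
  -- (★★)  D = ∑ c d * Dd d
  have hDddet : ∀ d, Dd d = (Matrix.of fun j => v j (d j)).det := by
    intro d
    show (tildeMat (detGen Q d)).det = _
    rw [htilde, Matrix.det_transpose, hrowdet]
  have hDdecomp : D = ∑ d : Fin (n + 1) → 𝒜, c d * Dd d := by
    rw [hD, htilde, Matrix.det_transpose, hrowagg, det_decomp]
    refine Finset.sum_congr rfl fun d _ => ?_
    rw [hDddet d]
  -- Cramer for x and xd
  have hxe : tildeMat (aggGen Q π) *ᵥ x = e :=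
    tilde_mulVec _ x hx hx1
  have hxde : ∀ d, tildeMat (detGen Q d) *ᵥ xd d = e :=
    fun d => tilde_mulVec _ (xd d) (hxd d).2.2 (hxd d).2.1
  -- (★)  D * x i = ∑ d, c d * (Dd d * xd d i)
  have hXdecomp : ∀ i, D * x i = ∑ d : Fin (n + 1) → 𝒜, c d * (Dd d * xd d i) := by
    intro i
    have h1 : ((tildeMat (aggGen Q π)).updateCol i e).det = D * x i :=
      cramer_sol _ x e hxe i
    have h2 : ∀ d, ((tildeMat (detGen Q d)).updateCol i e).det = Dd d * xd d i :=
      fun d => cramer_sol _ (xd d) e (hxde d) i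
    rw [← h1]
    -- updateColumn via transpose and row decomposition
    set w : Fin (n + 1) → 𝒜 → (Fin (n + 1) → ℝ) :=
      fun j a => if j = i then e else v j a with hw
    have hupdA : ((tildeMat (aggGen Q π)).updateCol i e).det
        = (Matrix.of fun j => ∑ a, π j a • w j a).det := by
      rw [← Matrix.det_transpose, htilde, Matrix.updateCol_transpose,
        Matrix.transpose_transpose]
      congr 1
      ext j k
      by_cases h : j = i
      · subst h
        simp only [Matrix.updateRow_self, Matrix.of_apply, hw, Finset.sum_apply,
          Pi.smul_apply, smul_eq_mul, if_pos rfl, if_true]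
        rw [← Finset.sum_mul, hsum j, one_mul]
      · rw [Matrix.updateRow_ne h]
        have := congrFun (congrFun hrowagg j) k
        simp only [Matrix.of_apply] at this ⊢
        rw [this]
        simp only [Finset.sum_apply, Pi.smul_apply, smul_eq_mul, hw, if_neg h]
    have hupdD : ∀ d, ((tildeMat (detGen Q d)).updateCol i e).det
        = (Matrix.of fun j => w j (d j)).det := by
      intro d
      rw [← Matrix.det_transpose, htilde, Matrix.updateCol_transpose,
        Matrix.transpose_transpose]
      congr 1
      ext j k
      by_cases h : j = i
      · subst h
        simp only [Matrix.updateRow_self, Matrix.of_apply, hw, if_pos rfl, if_true]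
      · rw [Matrix.updateRow_ne h]
        simp only [Matrix.of_apply, hw, if_neg h, hv, detGen]
    rw [hupdA, det_decomp]
    refine Finset.sum_congr rfl fun d _ => ?_
    rw [← h2 d, hupdD d]
  -- assemble
  refine ⟨?_, ?_, ?_⟩
  · intro d
    have hdivpos : 0 < Dd d / D := by
      rcases mul_pos_iff.mp (hsign d) with ⟨ha, hb⟩ | ⟨ha, hb⟩
      · exact div_pos ha hb
      · exact div_pos_of_neg_of_neg ha hb
    have : 0 ≤ c d := Finset.prod_nonneg fun k _ => hpos k (d k)
    calc (0:ℝ) ≤ c d * (Dd d / D) := mul_nonneg this (le_of_lt hdivpos)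
      _ = c d * Dd d / D := by ring
  · rw [← Finset.sum_div]
    rw [show ∑ d : Fin (n + 1) → 𝒜, c d * Dd d = D from hDdecomp.symm]
    exact div_self hDne
  · intro i
    have h1 : ∑ d : Fin (n + 1) → 𝒜, (c d * Dd d / D) * xd d i
        = (∑ d : Fin (n + 1) → 𝒜, c d * (Dd d * xd d i)) / D := by
      rw [Finset.sum_div]
      exact Finset.sum_congr rfl fun d _ => by ring
    rw [h1, ← hXdecomp i, mul_div_cancel_left₀ _ hDne]

end Aux

/-- The stationary distribution of the aggregated generator `Q^π` is the convex
combination of the stationary distributions `x^d` of the deterministic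
generators, with explicit weights
`μ_d = (∏ᵢ π_{i d(i)}) det(Q̃^d) / det(Q̃^π) ≥ 0` summing to `1`. -/
theorem stationary_dist_convex_combination {n : ℕ} {𝒜 : Type*}
    [Fintype 𝒜] [DecidableEq 𝒜] [Nonempty 𝒜]
    (Q : 𝒜 → Matrix (Fin (n + 1)) (Fin (n + 1)) ℝ)
    (hoff : ∀ a i j, i ≠ j → 0 ≤ Q a i j)
    (hrow : ∀ a i, ∑ j, Q a i j = 0)
    (hirr : ∀ π : Fin (n + 1) → 𝒜 → ℝ,
      (∀ i a, 0 ≤ π i a) → (∀ i, ∑ a, π i a = 1) →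
      ∀ i j : Fin (n + 1),
        Relation.ReflTransGen (fun p q => p ≠ q ∧ 0 < aggGen Q π p q) i j)
    (π : Fin (n + 1) → 𝒜 → ℝ)
    (hpos : ∀ i a, 0 ≤ π i a) (hsum : ∀ i, ∑ a, π i a = 1)
    (x : Fin (n + 1) → ℝ)
    (hx0 : ∀ i, 0 ≤ x i) (hx1 : ∑ i, x i = 1)
    (hx : Matrix.vecMul x (aggGen Q π) = 0)
    (xd : (Fin (n + 1) → 𝒜) → Fin (n + 1) → ℝ)
    (hxd : ∀ d : Fin (n + 1) → 𝒜, (∀ i, 0 ≤ xd d i) ∧ (∑ i, xd d i = 1) ∧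
      Matrix.vecMul (xd d) (detGen Q d) = 0) :
    (∀ d : Fin (n + 1) → 𝒜,
      0 ≤ (∏ k, π k (d k)) * (tildeMat (detGen Q d)).det /
        (tildeMat (aggGen Q π)).det) ∧
    (∑ d : Fin (n + 1) → 𝒜,
      (∏ k, π k (d k)) * (tildeMat (detGen Q d)).det /
        (tildeMat (aggGen Q π)).det) = 1 ∧
    ∀ i, x i = ∑ d : Fin (n + 1) → 𝒜,
      ((∏ k, π k (d k)) * (tildeMat (detGen Q d)).det /
        (tildeMat (aggGen Q π)).det) * xd d i :=
  stationary_aux Q hoff hrow hirr π hpos hsum x hx0 hx1 hx xd hxd
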